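/- For any ρ ∈ S_+^{A×A} with Tr_A(ρ) = σ and any probability vector p supported on the diagonal of A×A (i.e. p = ∑_x p_x e_x⊗e_x), it holds that ⟨√p √p^T, ρ⟩ ≤ F(p, q), where q_x = σ_{xx}. In particular, the inner product with a purification-type target is bounded by the fidelity with the diagonal of the reduced state. -/

import Mathlib

open Real Finset

lemma psd_entry_le_sqrt {n : Type*} [Fintype n] [DecidableEq n]
    {ρ : Matrix n n ℝ} (hρ : ρ.PosSemidef) (z z' : n) :
    ρ z z' ≤ Real.sqrt (ρ z z) * Real.sqrt (ρ z' z') := by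
  obtain ⟨B, rfl⟩ : ∃ B : Matrix n n ℝ, ρ = B.conjTranspose * B := by
    open scoped MatrixOrder in
    obtain ⟨X, hX, -, hXX⟩ :=
      CFC.exists_sqrt_of_isSelfAdjoint_of_quasispectrumRestricts hρ.isHermitian
        (QuasispectrumRestricts.nnreal_of_nonneg hρ.nonneg)
    exact ⟨X, by rw [← hXX, ← Matrix.star_eq_conjTranspose, hX.star_eq]⟩
  simp only [Matrix.mul_apply, Matrix.conjTranspose_apply, RCLike.star_def, conj_trivial]
  have hcs := Finset.sum_mul_sq_le_sq_mul_sq Finset.univ (fun k => B k z) (fun k => B k z')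
  calc ∑ k, B k z * B k z' ≤ |∑ k, B k z * B k z'| := le_abs_self _
    _ = Real.sqrt ((∑ k, B k z * B k z') ^ 2) := (Real.sqrt_sq_eq_abs _).symm
    _ ≤ Real.sqrt ((∑ k, B k z ^ 2) * (∑ k, B k z' ^ 2)) := Real.sqrt_le_sqrt hcs
    _ = Real.sqrt (∑ k, B k z * B k z) * Real.sqrt (∑ k, B k z' * B k z') := by
        rw [Real.sqrt_mul (by positivity)]
        simp [sq]

lemma psd_diag_nonneg {n : Type*} [Fintype n] [DecidableEq n]
    {ρ : Matrix n n ℝ} (hρ : ρ.PosSemidef) (i : n) : 0 ≤ ρ i i := by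
  exact hρ.diag_nonneg

/-- For `ρ ⪰ 0` on `ℂ^(A×A)`-analogue (real case) with partial
trace `σ` over the first factor, and a probability vector `p` supported on the
diagonal of `A × A`, the inner product `⟨√p √pᵀ, ρ⟩` is at most `F(p, q)` where
`q x = σ x x` is the diagonal of the reduced state. -/
theorem inner_le_fidelity_diag (A : Type*) [Fintype A] [DecidableEq A]
    (w : A → ℝ) (hw : ∀ x, 0 ≤ w x) (hw1 : (∑ x, w x) = 1)
    (p : A × A → ℝ) (hpdef : p = fun z => if z.1 = z.2 then w z.1 else 0)
    (ρ : Matrix (A × A) (A × A) ℝ) (hρ : ρ.PosSemidef)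
    (σ : Matrix A A ℝ)
    (hσ : (Matrix.of fun x y => ∑ a : A, ρ (a, x) (a, y)) = σ) :
    (∑ z, ∑ z', Real.sqrt (p z) * Real.sqrt (p z') * ρ z z')
      ≤ (∑ x, Real.sqrt (w x) * Real.sqrt (σ x x)) ^ 2 := by
  subst hpdef hσ
  -- reduce double sum over pairs to sum over diagonal
  have hdiagρ : ∀ x : A, ρ (x, x) (x, x) ≤ ∑ a : A, ρ (a, x) (a, x) := fun x =>
    Finset.single_le_sum (fun a _ => psd_diag_nonneg hρ (a, x)) (Finset.mem_univ x)
  have key : ∀ x y : A, ρ (x, x) (y, y) ≤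
      Real.sqrt ((Matrix.of fun x y => ∑ a : A, ρ (a, x) (a, y)) x x) *
      Real.sqrt ((Matrix.of fun x y => ∑ a : A, ρ (a, x) (a, y)) y y) := by
    intro x y
    refine (psd_entry_le_sqrt hρ _ _).trans ?_
    exact mul_le_mul (Real.sqrt_le_sqrt (hdiagρ x)) (Real.sqrt_le_sqrt (hdiagρ y))
      (Real.sqrt_nonneg _) (Real.sqrt_nonneg _)
  calc (∑ z : A × A, ∑ z' : A × A,
        Real.sqrt (if z.1 = z.2 then w z.1 else 0) *
        Real.sqrt (if z'.1 = z'.2 then w z'.1 else 0) * ρ z z')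
      = ∑ x : A, ∑ y : A, Real.sqrt (w x) * Real.sqrt (w y) * ρ (x, x) (y, y) := by
        simp only [Fintype.sum_prod_type]
        refine Finset.sum_congr rfl fun x _ => ?_
        rw [Finset.sum_eq_single x]
        · simp only [if_pos rfl]
          refine Finset.sum_congr rfl fun y _ => ?_
          rw [Finset.sum_eq_single y]
          · simp
          · intro b _ hb
            simp [Ne.symm hb]
          · simp
        · intro b _ hb
          simp [Ne.symm hb]
        · simp
    _ ≤ ∑ x : A, ∑ y : A, Real.sqrt (w x) * Real.sqrt (w y) *
          (Real.sqrt ((Matrix.of fun x y => ∑ a : A, ρ (a, x) (a, y)) x x) *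
           Real.sqrt ((Matrix.of fun x y => ∑ a : A, ρ (a, x) (a, y)) y y)) := by
        refine Finset.sum_le_sum fun x _ => Finset.sum_le_sum fun y _ => ?_
        exact mul_le_mul_of_nonneg_left (key x y) (by positivity)
    _ = (∑ x, Real.sqrt (w x) *
          Real.sqrt ((Matrix.of fun x y => ∑ a : A, ρ (a, x) (a, y)) x x)) ^ 2 := by
        rw [sq, Finset.sum_mul_sum]
        refine Finset.sum_congr rfl fun x _ => Finset.sum_congr rfl fun y _ => ?_
        ring
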